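/- The Reeve simplex T(k) = conv{0, e_1, e_2, (1,1,k)} ⊂ ℝ³ has volume k/6 and contains no lattice points of ℤ³ other than its four vertices; in particular it has no interior lattice points. -/

import Mathlib

open MeasureTheory

lemma reeve_hull (k : ℕ) (hk : 1 ≤ k) :
    convexHull ℝ ({![0,0,0],![1,0,0],![0,1,0],![1,1,(k:ℝ)]} : Set (Fin 3 → ℝ)) =
    {x | 0 ≤ x 2 ∧ x 2 ≤ (k:ℝ) * x 0 ∧ x 2 ≤ (k:ℝ) * x 1 ∧
      (k:ℝ) * (x 0 + x 1) - x 2 ≤ (k:ℝ)} := by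
  have hK : (0:ℝ) < k := by exact_mod_cast hk
  apply le_antisymm
  · apply convexHull_min
    · intro p hp
      simp only [Set.mem_insert_iff, Set.mem_singleton_iff] at hp
      rcases hp with h|h|h|h <;> subst h <;>
        refine ⟨?_, ?_, ?_, ?_⟩ <;> norm_num [Matrix.cons_val_two, Matrix.vecHead, Matrix.vecTail] <;> nlinarith
    · intro x hx y hy a b ha hb hab
      simp only [Set.mem_setOf_eq, Pi.add_apply, Pi.smul_apply, smul_eq_mul] at *
      obtain ⟨h1,h2,h3,h4⟩ := hx
      obtain ⟨g1,g2,g3,g4⟩ := hy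
      refine ⟨by nlinarith, by nlinarith, by nlinarith, by nlinarith⟩
  · intro x hx
    obtain ⟨h0, h1, h2, h3⟩ := hx
    set c : ℝ := x 2 / k with hc
    set a : ℝ := x 0 - c with ha
    set b : ℝ := x 1 - c with hb
    have hck : c * k = x 2 := by rw [hc]; exact div_mul_cancel₀ _ hK.ne'
    have hc0 : 0 ≤ c := div_nonneg h0 hK.le
    have ha0 : 0 ≤ a := by
      rw [ha, sub_nonneg, hc, div_le_iff₀ hK]; nlinarith
    have hb0 : 0 ≤ b := by
      rw [hb, sub_nonneg, hc, div_le_iff₀ hK]; nlinarith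
    have hsum : a + b + c ≤ 1 := by
      rw [ha, hb]; nlinarith
    have key : (Finset.univ : Finset (Fin 4)).centerMass ![1 - a - b - c, a, b, c]
        ![![0,0,0],![1,0,0],![0,1,0],![1,1,(k:ℝ)]] ∈
        convexHull ℝ ({![0,0,0],![1,0,0],![0,1,0],![1,1,(k:ℝ)]} : Set (Fin 3 → ℝ)) := by
      apply Finset.centerMass_mem_convexHull
      · intro i _; fin_cases i <;> simp <;> linarith
      · simp [Fin.sum_univ_four]; linarith
      · intro i _; fin_cases i <;> simp [Set.mem_insert_iff]
    have hw1 : ∑ i : Fin 4, (![1 - a - b - c, a, b, c]) i = 1 := by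
      simp [Fin.sum_univ_four]; ring
    rw [Finset.centerMass_eq_of_sum_1 _ _ hw1] at key
    convert key using 1
    funext j
    simp only [Fin.sum_univ_four, Pi.add_apply, Pi.smul_apply, smul_eq_mul]
    fin_cases j <;> simp [Matrix.vecHead, Matrix.vecTail] <;>
      [(rw [ha]; ring); (rw [hb]; ring); exact hck.symm]

lemma tail_int_le (a : ℝ) (ha : a ≤ 1) :
    ∫⁻ x in Set.Ici a, ENNReal.ofReal (1 - x) = ENNReal.ofReal ((1 - a)^2 / 2) := by
  have hsplit : Set.Ici a = Set.Icc a 1 ∪ Set.Ioi 1 := (Set.Icc_union_Ioi_eq_Ici ha).symm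
  rw [hsplit, lintegral_union measurableSet_Ioi
    (by rw [Set.disjoint_left]; intro x hx hx'; exact absurd hx.2 (not_le.2 hx'))]
  have h2 : ∫⁻ x in Set.Ioi (1:ℝ), ENNReal.ofReal (1 - x) = 0 := by
    rw [setLIntegral_congr_fun measurableSet_Ioi
      (show Set.EqOn (fun x : ℝ => ENNReal.ofReal (1 - x)) (fun _ => 0) (Set.Ioi 1) from fun x (hx : 1 < x) => ENNReal.ofReal_eq_zero.2 (by linarith))]
    simp
  rw [h2, add_zero]
  rw [← ofReal_integral_eq_lintegral_ofReal]
  · congr 1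
    rw [integral_Icc_eq_integral_Ioc, ← intervalIntegral.integral_of_le ha]
    have : ∫ x in a..1, (1 - x) = ∫ x in (1-1)..(1-a), x := by
      simpa using intervalIntegral.integral_comp_sub_left (a := a) (b := 1) (fun x => x) 1
    rw [this]
    simp [integral_id]
  · exact (continuous_const.sub continuous_id).integrableOn_Icc
  · exact (ae_restrict_iff' measurableSet_Icc).2 (ae_of_all _ fun x hx => by
      simp only [Pi.zero_apply]; linarith [hx.2])

lemma tail_int_ge (a : ℝ) (ha : 1 ≤ a) :
    ∫⁻ x in Set.Ici a, ENNReal.ofReal (1 - x) = 0 := by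
  rw [setLIntegral_congr_fun measurableSet_Ici
    (show Set.EqOn (fun x : ℝ => ENNReal.ofReal (1 - x)) (fun _ => 0) (Set.Ici a) from fun x (hx : a ≤ x) => ENNReal.ofReal_eq_zero.2 (by linarith))]
  simp

lemma reeve_vol (k : ℕ) (hk : 1 ≤ k) :
    (volume : Measure (ℝ × ℝ × ℝ))
      {p : ℝ × ℝ × ℝ | 0 ≤ p.1 ∧ p.1 ≤ (k:ℝ) * p.2.1 ∧ p.1 ≤ (k:ℝ) * p.2.2 ∧
        (k:ℝ) * (p.2.1 + p.2.2) - p.1 ≤ (k:ℝ)} = ENNReal.ofReal ((k:ℝ)/6) := by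
  have hK : (0:ℝ) < k := by exact_mod_cast hk
  set A : Set (ℝ × ℝ × ℝ) := {p | 0 ≤ p.1 ∧ p.1 ≤ (k:ℝ) * p.2.1 ∧ p.1 ≤ (k:ℝ) * p.2.2 ∧
        (k:ℝ) * (p.2.1 + p.2.2) - p.1 ≤ (k:ℝ)} with hA
  have hAm : MeasurableSet A := by
    apply MeasurableSet.inter
    · exact measurableSet_le measurable_const measurable_fst
    apply MeasurableSet.inter
    · exact measurableSet_le measurable_fst ((measurable_fst.comp measurable_snd).const_mul _)
    apply MeasurableSet.inter
    · exact measurableSet_le measurable_fst ((measurable_snd.comp measurable_snd).const_mul _)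
    · exact measurableSet_le
        ((((measurable_fst.comp measurable_snd).add
          (measurable_snd.comp measurable_snd)).const_mul _).sub measurable_fst) measurable_const
  have hvol : (volume : Measure (ℝ × ℝ × ℝ)) = (volume : Measure ℝ).prod volume := rfl
  rw [hvol, Measure.prod_apply hAm]
  have hvol2 : (volume : Measure (ℝ × ℝ)) = (volume : Measure ℝ).prod volume := rfl
  have hslice : ∀ z : ℝ, (volume : Measure (ℝ × ℝ)) (Prod.mk z ⁻¹' A) =
      Set.indicator (Set.Icc 0 (k:ℝ)) (fun z => ENNReal.ofReal ((1 - z/(k:ℝ))^2/2)) z := by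
    intro z
    by_cases hz : 0 ≤ z
    · have hzk : z/(k:ℝ) * k = z := div_mul_cancel₀ z hK.ne'
      have hpre : Prod.mk z ⁻¹' A = {q : ℝ × ℝ | z ≤ (k:ℝ) * q.1 ∧ z ≤ (k:ℝ) * q.2 ∧
          (k:ℝ) * (q.1 + q.2) - z ≤ (k:ℝ)} := by
        ext q; simp [hA, hz]
      have hBm : MeasurableSet {q : ℝ × ℝ | z ≤ (k:ℝ) * q.1 ∧ z ≤ (k:ℝ) * q.2 ∧
          (k:ℝ) * (q.1 + q.2) - z ≤ (k:ℝ)} := by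
        apply MeasurableSet.inter
        · exact measurableSet_le measurable_const (measurable_fst.const_mul _)
        apply MeasurableSet.inter
        · exact measurableSet_le measurable_const (measurable_snd.const_mul _)
        · exact measurableSet_le
            (((measurable_fst.add measurable_snd).const_mul _).sub measurable_const)
            measurable_const
      rw [hpre, hvol2, Measure.prod_apply hBm]
      have hinner : ∀ x : ℝ, (volume : Measure ℝ)
          (Prod.mk x ⁻¹' {q : ℝ × ℝ | z ≤ (k:ℝ) * q.1 ∧ z ≤ (k:ℝ) * q.2 ∧
            (k:ℝ) * (q.1 + q.2) - z ≤ (k:ℝ)}) =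
          Set.indicator (Set.Ici (z/(k:ℝ))) (fun x => ENNReal.ofReal (1 - x)) x := by
        intro x
        by_cases hx : z ≤ (k:ℝ) * x
        · have hmem : x ∈ Set.Ici (z/(k:ℝ)) := by
            rw [Set.mem_Ici, div_le_iff₀ hK]; nlinarith
          have h1 : Prod.mk x ⁻¹' {q : ℝ × ℝ | z ≤ (k:ℝ) * q.1 ∧ z ≤ (k:ℝ) * q.2 ∧
              (k:ℝ) * (q.1 + q.2) - z ≤ (k:ℝ)} =
              Set.Icc (z/(k:ℝ)) ((k + z)/(k:ℝ) - x) := by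
            ext y
            simp only [Set.mem_preimage, Set.mem_setOf_eq, Set.mem_Icc, hx, true_and]
            have hkz : ((k:ℝ) + z)/(k:ℝ) * k = k + z := div_mul_cancel₀ _ hK.ne'
            constructor
            · rintro ⟨h1, h2⟩
              constructor
              · nlinarith
              · nlinarith
            · rintro ⟨h1, h2⟩
              constructor
              · nlinarith
              · nlinarith
          rw [h1, Real.volume_Icc, Set.indicator_of_mem hmem]
          congr 1
          field_simp
          ring
        · have hmem : x ∉ Set.Ici (z/(k:ℝ)) := by
            rw [Set.mem_Ici, div_le_iff₀ hK]; intro h; exact hx (by nlinarith)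
          have h1 : Prod.mk x ⁻¹' {q : ℝ × ℝ | z ≤ (k:ℝ) * q.1 ∧ z ≤ (k:ℝ) * q.2 ∧
              (k:ℝ) * (q.1 + q.2) - z ≤ (k:ℝ)} = ∅ := by
            ext y; simp [hx]
          rw [h1, Set.indicator_of_notMem hmem, measure_empty]
      rw [lintegral_congr hinner, lintegral_indicator measurableSet_Ici]
      by_cases hzk2 : z ≤ (k:ℝ)
      · have ha : z/(k:ℝ) ≤ 1 := by rw [div_le_one hK]; exact hzk2
        rw [tail_int_le _ ha, Set.indicator_of_mem (Set.mem_Icc.2 ⟨hz, hzk2⟩)]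
      · have ha : 1 ≤ z/(k:ℝ) := by rw [le_div_iff₀ hK]; linarith
        rw [tail_int_ge _ ha, Set.indicator_of_notMem (by simp [Set.mem_Icc]; intro _; linarith)]
    · have hpre : Prod.mk z ⁻¹' A = ∅ := by
        ext q; simp [hA, hz]
      rw [hpre, measure_empty, Set.indicator_of_notMem (by simp [Set.mem_Icc]; intro h; linarith)]
  rw [lintegral_congr hslice, lintegral_indicator measurableSet_Icc]
  rw [← ofReal_integral_eq_lintegral_ofReal]
  · congr 1
    rw [integral_Icc_eq_integral_Ioc, ← intervalIntegral.integral_of_le hK.le]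
    have h1 : ∀ z : ℝ, (1 - z/(k:ℝ))^2/2 = (1/(2*(k:ℝ)^2)) * ((k:ℝ) - z)^2 := by
      intro z; field_simp
    rw [intervalIntegral.integral_congr (fun z _ => h1 z)]
    rw [intervalIntegral.integral_const_mul]
    have h2 := intervalIntegral.integral_comp_sub_left (a := (0:ℝ)) (b := (k:ℝ))
      (fun x => x^2) (k:ℝ)
    rw [show (k:ℝ)-(k:ℝ) = 0 by ring, show (k:ℝ)-0 = (k:ℝ) by ring] at h2
    rw [h2, integral_pow]
    norm_num
    field_simp
    ring
  · exact (Continuous.integrableOn_Icc (by continuity))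
  · exact (ae_restrict_iff' measurableSet_Icc).2 (ae_of_all _ fun x hx => by positivity)

lemma reeve_vol_pi (k : ℕ) (hk : 1 ≤ k) :
    volume {x : Fin 3 → ℝ | 0 ≤ x 2 ∧ x 2 ≤ (k:ℝ) * x 0 ∧ x 2 ≤ (k:ℝ) * x 1 ∧
      (k:ℝ) * (x 0 + x 1) - x 2 ≤ (k:ℝ)} = ENNReal.ofReal ((k:ℝ)/6) := by
  set A : Set (ℝ × ℝ × ℝ) := {p | 0 ≤ p.1 ∧ p.1 ≤ (k:ℝ) * p.2.1 ∧ p.1 ≤ (k:ℝ) * p.2.2 ∧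
        (k:ℝ) * (p.2.1 + p.2.2) - p.1 ≤ (k:ℝ)} with hA
  have hAm : MeasurableSet A := by
    apply MeasurableSet.inter
    · exact measurableSet_le measurable_const measurable_fst
    apply MeasurableSet.inter
    · exact measurableSet_le measurable_fst ((measurable_fst.comp measurable_snd).const_mul _)
    apply MeasurableSet.inter
    · exact measurableSet_le measurable_fst ((measurable_snd.comp measurable_snd).const_mul _)
    · exact measurableSet_le
        ((((measurable_fst.comp measurable_snd).add
          (measurable_snd.comp measurable_snd)).const_mul _).sub measurable_fst) measurable_const
  have hMP : MeasurePreserving (fun x : Fin 3 → ℝ => (x 2, (x 0, x 1))) volume volume := by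
    have h1 := volume_preserving_piFinSuccAbove (fun _ : Fin 3 => ℝ) 2
    have h2 := (MeasurePreserving.id (volume : Measure ℝ)).prod
      (volume_preserving_finTwoArrow ℝ)
    exact h2.comp h1
  have hT : {x : Fin 3 → ℝ | 0 ≤ x 2 ∧ x 2 ≤ (k:ℝ) * x 0 ∧ x 2 ≤ (k:ℝ) * x 1 ∧
      (k:ℝ) * (x 0 + x 1) - x 2 ≤ (k:ℝ)} =
      (fun x : Fin 3 → ℝ => (x 2, (x 0, x 1))) ⁻¹' A := rfl
  rw [hT, hMP.measure_preimage hAm.nullMeasurableSet, reeve_vol k hk]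

lemma vec_eq {x : Fin 3 → ℝ} {u v w : ℝ} (h0 : x 0 = u) (h1 : x 1 = v) (h2 : x 2 = w) :
    x = ![u, v, w] := by
  funext i
  fin_cases i <;> simpa [Matrix.vecHead, Matrix.vecTail]

lemma reeve_lattice (k : ℕ) (hk : 1 ≤ k) :
    {x : Fin 3 → ℝ |
        x ∈ convexHull ℝ
          ({![0, 0, 0], ![1, 0, 0], ![0, 1, 0], ![1, 1, (k : ℝ)]} :
            Set (Fin 3 → ℝ)) ∧ ∀ i, ∃ z : ℤ, x i = z} =
      {![0, 0, 0], ![1, 0, 0], ![0, 1, 0], ![1, 1, (k : ℝ)]} := by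
  have hK : (0:ℝ) < k := by exact_mod_cast hk
  ext x
  simp only [Set.mem_setOf_eq, Set.mem_insert_iff, Set.mem_singleton_iff]
  constructor
  · rintro ⟨hx, hz⟩
    rw [reeve_hull k hk] at hx
    obtain ⟨h0, h1, h2, h3⟩ := hx
    obtain ⟨z0, hz0⟩ := hz 0
    obtain ⟨z1, hz1⟩ := hz 1
    obtain ⟨z2, hz2⟩ := hz 2
    -- bounds on x 0, x 1
    have hx0l : 0 ≤ x 0 := by nlinarith
    have hx1l : 0 ≤ x 1 := by nlinarith
    have hx0u : x 0 ≤ 1 := by nlinarith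
    have hx1u : x 1 ≤ 1 := by nlinarith
    have hz0' : z0 = 0 ∨ z0 = 1 := by
      have l : (0:ℝ) ≤ z0 := hz0 ▸ hx0l
      have u : (z0:ℝ) ≤ 1 := hz0 ▸ hx0u
      have l' : (0:ℤ) ≤ z0 := by exact_mod_cast l
      have u' : z0 ≤ 1 := by exact_mod_cast u
      omega
    have hz1' : z1 = 0 ∨ z1 = 1 := by
      have l : (0:ℝ) ≤ z1 := hz1 ▸ hx1l
      have u : (z1:ℝ) ≤ 1 := hz1 ▸ hx1u
      have l' : (0:ℤ) ≤ z1 := by exact_mod_cast l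
      have u' : z1 ≤ 1 := by exact_mod_cast u
      omega
    rcases hz0' with h|h <;> rcases hz1' with h'|h' <;> subst h <;> subst h'
    · -- x0 = 0, x1 = 0
      have e0 : x 0 = 0 := by rw [hz0]; norm_num
      have e1 : x 1 = 0 := by rw [hz1]; norm_num
      have e2 : x 2 = 0 := le_antisymm (by nlinarith) h0
      exact Or.inl (vec_eq e0 e1 e2)
    · -- x0 = 0, x1 = 1
      have e0 : x 0 = 0 := by rw [hz0]; norm_num
      have e1 : x 1 = 1 := by rw [hz1]; norm_num
      have e2 : x 2 = 0 := le_antisymm (by nlinarith) h0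
      exact Or.inr (Or.inr (Or.inl (vec_eq e0 e1 e2)))
    · -- x0 = 1, x1 = 0
      have e0 : x 0 = 1 := by rw [hz0]; norm_num
      have e1 : x 1 = 0 := by rw [hz1]; norm_num
      have e2 : x 2 = 0 := le_antisymm (by nlinarith) h0
      exact Or.inr (Or.inl (vec_eq e0 e1 e2))
    · -- x0 = 1, x1 = 1
      have e0 : x 0 = 1 := by rw [hz0]; norm_num
      have e1 : x 1 = 1 := by rw [hz1]; norm_num
      have e2 : x 2 = k := le_antisymm (by nlinarith) (by nlinarith)
      exact Or.inr (Or.inr (Or.inr (vec_eq e0 e1 e2)))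
  · intro hx
    constructor
    · apply subset_convexHull
      simpa [Set.mem_insert_iff] using hx
    · rcases hx with h|h|h|h <;> subst h <;> intro i <;> fin_cases i
      · exact ⟨0, by norm_num⟩
      · exact ⟨0, by norm_num⟩
      · exact ⟨0, by norm_num⟩
      · exact ⟨1, by norm_num⟩
      · exact ⟨0, by norm_num⟩
      · exact ⟨0, by norm_num⟩
      · exact ⟨0, by norm_num⟩
      · exact ⟨1, by norm_num⟩
      · exact ⟨0, by norm_num⟩
      · exact ⟨1, by norm_num⟩
      · exact ⟨1, by norm_num⟩
      · exact ⟨(k:ℤ), by push_cast; simp [Matrix.vecHead, Matrix.vecTail]⟩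

lemma interior_perturb {s : Set (Fin 3 → ℝ)} {v : Fin 3 → ℝ} (hv : v ∈ interior s)
    (w : Fin 3 → ℝ) : ∃ t : ℝ, 0 < t ∧ v + t • w ∈ s := by
  have hnh : s ∈ nhds v := mem_interior_iff_mem_nhds.1 hv
  have cont : Filter.Tendsto (fun t : ℝ => v + t • w) (nhds 0) (nhds v) := by
    have hc : Continuous fun t : ℝ => v + t • w := by continuity
    have := hc.tendsto 0
    simpa using this
  have hev := Filter.mem_map.1 (cont hnh)
  rw [Metric.mem_nhds_iff] at hev
  obtain ⟨ε, hε, hball⟩ := hev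
  refine ⟨ε/2, by linarith, ?_⟩
  apply hball
  simp [Real.dist_eq, abs_of_pos hε]
  linarith

lemma reeve_interior (k : ℕ) (hk : 1 ≤ k) :
    {x : Fin 3 → ℝ |
        x ∈ interior (convexHull ℝ
          ({![0, 0, 0], ![1, 0, 0], ![0, 1, 0], ![1, 1, (k : ℝ)]} :
            Set (Fin 3 → ℝ))) ∧ ∀ i, ∃ z : ℤ, x i = z} = ∅ := by
  have hK : (0:ℝ) < k := by exact_mod_cast hk
  ext x
  simp only [Set.mem_setOf_eq, Set.mem_empty_iff_false, iff_false, not_and]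
  intro hin hz
  have hvert : x ∈ ({![0, 0, 0], ![1, 0, 0], ![0, 1, 0], ![1, 1, (k : ℝ)]} :
      Set (Fin 3 → ℝ)) := by
    rw [← reeve_lattice k hk]
    exact ⟨interior_subset hin, hz⟩
  simp only [Set.mem_insert_iff, Set.mem_singleton_iff] at hvert
  rcases hvert with h|h|h|h
  · subst h
    obtain ⟨t, ht, hmem⟩ := interior_perturb hin ![0, 0, -1]
    rw [reeve_hull k hk] at hmem
    have := hmem.1
    simp [Matrix.vecHead, Matrix.vecTail] at this
    linarith
  · subst h
    obtain ⟨t, ht, hmem⟩ := interior_perturb hin ![0, 0, -1]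
    rw [reeve_hull k hk] at hmem
    have := hmem.1
    simp [Matrix.vecHead, Matrix.vecTail] at this
    linarith
  · subst h
    obtain ⟨t, ht, hmem⟩ := interior_perturb hin ![0, 0, -1]
    rw [reeve_hull k hk] at hmem
    have := hmem.1
    simp [Matrix.vecHead, Matrix.vecTail] at this
    linarith
  · subst h
    obtain ⟨t, ht, hmem⟩ := interior_perturb hin ![1, 0, 0]
    rw [reeve_hull k hk] at hmem
    have := hmem.2.2.2
    simp [Matrix.vecHead, Matrix.vecTail] at this
    nlinarith

/-- The Reeve simplex `T(k) = conv{0, e₁, e₂, (1,1,k)}` has volume `k/6`,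
its only lattice points are its four vertices, and in particular it has no
interior lattice points. -/
theorem reeve_simplex_properties (k : ℕ) (hk : 1 ≤ k) :
    volume (convexHull ℝ
        ({![0, 0, 0], ![1, 0, 0], ![0, 1, 0], ![1, 1, (k : ℝ)]} :
          Set (Fin 3 → ℝ))) = ENNReal.ofReal ((k : ℝ) / 6) ∧
    {x : Fin 3 → ℝ |
        x ∈ convexHull ℝ
          ({![0, 0, 0], ![1, 0, 0], ![0, 1, 0], ![1, 1, (k : ℝ)]} :
            Set (Fin 3 → ℝ)) ∧ ∀ i, ∃ z : ℤ, x i = z} =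
      {![0, 0, 0], ![1, 0, 0], ![0, 1, 0], ![1, 1, (k : ℝ)]} ∧
    {x : Fin 3 → ℝ |
        x ∈ interior (convexHull ℝ
          ({![0, 0, 0], ![1, 0, 0], ![0, 1, 0], ![1, 1, (k : ℝ)]} :
            Set (Fin 3 → ℝ))) ∧ ∀ i, ∃ z : ℤ, x i = z} = ∅ := by
  refine ⟨?_, reeve_lattice k hk, reeve_interior k hk⟩
  rw [reeve_hull k hk]
  exact reeve_vol_pi k hk
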